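/- Any limit-nilpotent DDS is equicontinuous: if the limit set Ω_F = ∩_{j∈ℕ} F^j(X) is a singleton {z}, then F is equicontinuous. -/

import Mathlib

/-- Any limit-nilpotent DDS is equicontinuous. -/
theorem stmt6 {X : Type*} [MetricSpace X] [CompactSpace X] (F : X → X) (hF : Continuous F)
    (z : X) (h : (⋂ j : ℕ, F^[j] '' Set.univ) = {z}) :
    ∀ ε > (0 : ℝ), ∃ δ > (0 : ℝ), ∀ x y : X, dist x y < δ →
      ∀ t : ℕ, dist (F^[t] x) (F^[t] y) < ε := by
  intro ε hε
  have hK : ∀ n : ℕ, IsCompact (F^[n] '' Set.univ) := fun n =>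
    isCompact_univ.image (hF.iterate n)
  have hmono : Antitone (fun n : ℕ => F^[n] '' Set.univ) := by
    intro m n hmn
    rintro _ ⟨x, -, rfl⟩
    refine ⟨F^[n - m] x, Set.mem_univ _, ?_⟩
    rw [← Function.iterate_add_apply, Nat.add_sub_cancel' hmn]
  -- Step 1: uniform convergence of iterates to z
  have key : ∀ η > (0 : ℝ), ∃ N : ℕ, ∀ x : X, dist (F^[N] x) z < η := by
    intro η hη
    by_contra hcon
    push_neg at hcon
    set S : ℕ → Set X := fun n => (F^[n] '' Set.univ) ∩ {y | η ≤ dist y z} with hS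
    have hdir : Directed (· ⊇ ·) S := by
      intro m n
      exact ⟨max m n, Set.inter_subset_inter_left _ (hmono (le_max_left m n)),
        Set.inter_subset_inter_left _ (hmono (le_max_right m n))⟩
    have hne : ∀ n, (S n).Nonempty := by
      intro n
      obtain ⟨x, hx⟩ := hcon n
      exact ⟨F^[n] x, ⟨x, Set.mem_univ x, rfl⟩, hx⟩
    have hcl : ∀ n, IsClosed (S n) := fun n =>
      (hK n).isClosed.inter (isClosed_le continuous_const
        (continuous_id.dist continuous_const))
    have hcp : ∀ n, IsCompact (S n) := fun n => (hcl n).isCompact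
    obtain ⟨w, hw⟩ :=
      IsCompact.nonempty_iInter_of_directed_nonempty_isCompact_isClosed S hdir hne hcp hcl
    have hw1 : w ∈ ⋂ j : ℕ, F^[j] '' Set.univ := by
      refine Set.mem_iInter.mpr fun j => ?_
      exact (Set.mem_iInter.mp hw j).1
    have hwz : w = z := by
      rw [h] at hw1; exact hw1
    have : η ≤ dist w z := (Set.mem_iInter.mp hw 0).2
    rw [hwz, dist_self] at this
    linarith
  -- Step 2: uniform equicontinuity for finitely many iterates
  have unif : ∀ N : ℕ, ∃ δ > (0 : ℝ), ∀ t ≤ N, ∀ x y : X, dist x y < δ →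
      dist (F^[t] x) (F^[t] y) < ε := by
    intro N
    induction N with
    | zero =>
      refine ⟨ε, hε, ?_⟩
      intro t ht x y hxy
      interval_cases t
      simpa using hxy
    | succ n ih =>
      obtain ⟨δ₁, hδ₁, h1⟩ := ih
      have huc : UniformContinuous (F^[n + 1]) :=
        CompactSpace.uniformContinuous_of_continuous (hF.iterate (n + 1))
      obtain ⟨δ₂, hδ₂, h2⟩ := Metric.uniformContinuous_iff.mp huc ε hε
      refine ⟨min δ₁ δ₂, lt_min hδ₁ hδ₂, ?_⟩
      intro t ht x y hxy
      by_cases htn : t = n + 1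
      · subst htn
        exact h2 (lt_of_lt_of_le hxy (min_le_right _ _))
      · exact h1 t (Nat.lt_succ_iff.mp (lt_of_le_of_ne ht htn)) x y
          (lt_of_lt_of_le hxy (min_le_left _ _))
  obtain ⟨N, hN⟩ := key (ε / 2) (half_pos hε)
  obtain ⟨δ, hδ, hδ'⟩ := unif N
  refine ⟨δ, hδ, ?_⟩
  intro x y hxy t
  by_cases ht : t ≤ N
  · exact hδ' t ht x y hxy
  · push_neg at ht
    have hrw : ∀ w : X, F^[t] w = F^[N] (F^[t - N] w) := by
      intro w
      rw [← Function.iterate_add_apply, Nat.add_sub_cancel' ht.le]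
    calc dist (F^[t] x) (F^[t] y) ≤ dist (F^[t] x) z + dist z (F^[t] y) := dist_triangle _ _ _
      _ < ε / 2 + ε / 2 := by
          apply add_lt_add
          · rw [hrw x]; exact hN _
          · rw [dist_comm, hrw y]; exact hN _
      _ = ε := add_halves ε
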